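/- For a tree T of order m ≥ 2 and a cycle C of order n ≥ 3, dem(T □ C) = n if n ≥ 2m+1, and dem(T □ C) = 2m if n ≤ 2m. -/

import Mathlib

set_option maxHeartbeats 1000000
open SimpleGraph
open scoped Fin.CommRing Fin.NatCast Fin.IntCast

section Helpers
variable {V : Type*} {G : SimpleGraph V} {x y : V}

lemma dist_eq_of_walk (w : G.Walk x y) (hmin : ∀ p : G.Walk x y, w.length ≤ p.length) :
    G.dist x y = w.length := by
  refine le_antisymm (SimpleGraph.dist_le w) ?_
  obtain ⟨p, hp⟩ := (Walk.reachable w).exists_walk_length_eq_dist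
  rw [← hp]; exact hmin p

lemma deleteEdges_dist_eq {e : Sym2 V} (w : G.Walk x y) (hw : w.length = G.dist x y)
    (he : e ∉ w.edges) : (G.deleteEdges {e}).dist x y = G.dist x y := by
  have h1 : (G.deleteEdges {e}).dist x y ≤ G.dist x y := by
    rw [← hw]
    have := SimpleGraph.dist_le (w.toDeleteEdges {e} (by rintro f hf rfl; exact he hf))
    simpa using this
  refine le_antisymm h1 ?_
  have hr : (G.deleteEdges {e}).Reachable x y :=
    Walk.reachable (w.toDeleteEdges {e} (by rintro f hf rfl; exact he hf))
  obtain ⟨p, hp⟩ := hr.exists_walk_length_eq_dist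
  calc G.dist x y ≤ (p.map (Hom.ofLE (G.deleteEdges_le _))).length :=
        SimpleGraph.dist_le _
    _ = p.length := Walk.length_map _ _
    _ = _ := hp

lemma monitors_of {e : Sym2 V} {d : ℕ} (hd : G.dist x y = d) (hd1 : 1 ≤ d)
    (h : ∀ p : G.Walk x y, e ∉ p.edges → d < p.length) :
    G.dist x y ≠ (G.deleteEdges {e}).dist x y := by
  intro hEq
  by_cases hr : (G.deleteEdges {e}).Reachable x y
  · obtain ⟨p, hp⟩ := hr.exists_walk_length_eq_dist
    set q := p.map (Hom.ofLE (G.deleteEdges_le {e})) with hq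
    have hqe : e ∉ q.edges := by
      intro hmem
      rw [hq, Walk.edges_map] at hmem
      obtain ⟨f, hf, hfe⟩ := List.mem_map.mp hmem
      have : f = e := by simpa [Sym2.map_id'] using hfe
      subst this
      have := p.edges_subset_edgeSet hf
      rw [SimpleGraph.edgeSet_deleteEdges] at this
      exact this.2 rfl
    have := h q hqe
    rw [Walk.length_map, hp, ← hEq, hd] at this
    omega
  · rw [SimpleGraph.dist_eq_zero_of_not_reachable hr] at hEq
    omega

end Helpers

section BoxDecomp
variable {α β : Type*} {G : SimpleGraph α} {H : SimpleGraph β}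

lemma boxProd_walk_decomp :
    ∀ {x y : α × β} (w : (G □ H).Walk x y),
    ∃ (tw : G.Walk x.1 y.1) (cw : H.Walk x.2 y.2),
      tw.length + cw.length = w.length ∧
      (∀ p q, s(p, q) ∈ tw.edges → ∃ r, s((p, r), (q, r)) ∈ w.edges) ∧
      (∀ p q, s(p, q) ∈ cw.edges → ∃ c, s((c, p), (c, q)) ∈ w.edges) ∧
      (∀ v ∈ w.support, v.1 ∈ tw.support ∧ v.2 ∈ cw.support) := by
  intro x y w
  induction w with
  | nil => exact ⟨Walk.nil, Walk.nil, by simp, by simp, by simp, by simp⟩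
  | @cons u v z h w ih =>
    obtain ⟨tw, cw, hlen, hT, hC, hsup⟩ := ih
    rcases SimpleGraph.boxProd_adj.mp h with ⟨ha, hb⟩ | ⟨ha, hb⟩
    · -- G.Adj u.1 v.1, u.2 = v.2
      refine ⟨Walk.cons ha tw, cw.copy hb.symm rfl, ?_, ?_, ?_, ?_⟩
      · simp only [Walk.length_cons, Walk.length_copy]; omega
      · intro p q hpq
        rw [Walk.edges_cons, List.mem_cons] at hpq
        rcases hpq with h1 | h1
        · refine ⟨u.2, ?_⟩
          rw [Walk.edges_cons, List.mem_cons]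
          left
          have hv : ((v.1 : α), (u.2 : β)) = v := by rw [hb]
          have hu : ((u.1 : α), (u.2 : β)) = u := rfl
          rcases Sym2.eq_iff.mp h1 with ⟨rfl, rfl⟩ | ⟨rfl, rfl⟩
          · rw [hu, hv]
          · rw [hu, hv, Sym2.eq_swap]
        · obtain ⟨r, hr⟩ := hT p q h1
          exact ⟨r, by simp [hr]⟩
      · intro p q hpq
        rw [Walk.edges_copy] at hpq
        obtain ⟨c, hc⟩ := hC p q hpq
        exact ⟨c, by simp [hc]⟩
      · intro t ht
        rw [Walk.support_cons, List.mem_cons] at ht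
        rcases ht with rfl | ht
        · constructor
          · simp
          · rw [Walk.support_copy]
            have := (hsup v (Walk.start_mem_support w)).2
            rw [hb]; exact this
        · have := hsup t ht
          refine ⟨by simp [this.1], by rw [Walk.support_copy]; exact this.2⟩
    · -- H.Adj u.2 v.2, u.1 = v.1
      refine ⟨tw.copy hb.symm rfl, Walk.cons ha cw, ?_, ?_, ?_, ?_⟩
      · simp [hlen]; omega
      · intro p q hpq
        rw [Walk.edges_copy] at hpq
        obtain ⟨r, hr⟩ := hT p q hpq
        exact ⟨r, by simp [hr]⟩
      · intro p q hpq
        rw [Walk.edges_cons, List.mem_cons] at hpq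
        rcases hpq with h1 | h1
        · refine ⟨u.1, ?_⟩
          rw [Walk.edges_cons, List.mem_cons]
          left
          have hv : ((u.1 : α), (v.2 : β)) = v := by rw [hb]
          have hu : ((u.1 : α), (u.2 : β)) = u := rfl
          rcases Sym2.eq_iff.mp h1 with ⟨rfl, rfl⟩ | ⟨rfl, rfl⟩
          · rw [hu, hv]
          · rw [hu, hv, Sym2.eq_swap]
        · obtain ⟨c, hc⟩ := hC p q h1
          exact ⟨c, by simp [hc]⟩
      · intro t ht
        rw [Walk.support_cons, List.mem_cons] at ht
        rcases ht with rfl | ht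
        · constructor
          · rw [Walk.support_copy]
            have := (hsup v (Walk.start_mem_support w)).1
            rw [hb]; exact this
          · simp
        · have := hsup t ht
          refine ⟨by rw [Walk.support_copy]; exact this.1, by simp [this.2]⟩

lemma boxProd_walk_length_ge (hG : G.Connected) (hH : H.Connected) {x y : α × β}
    (w : (G □ H).Walk x y) : G.dist x.1 y.1 + H.dist x.2 y.2 ≤ w.length := by
  obtain ⟨tw, cw, hlen, -, -, -⟩ := boxProd_walk_decomp w
  have := SimpleGraph.dist_le tw
  have := SimpleGraph.dist_le cw
  omega

lemma boxProd_dist (hG : G.Connected) (hH : H.Connected) (x y : α × β) :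
    (G □ H).dist x y = G.dist x.1 y.1 + H.dist x.2 y.2 := by
  obtain ⟨tw, htw⟩ := hG.exists_walk_length_eq_dist x.1 y.1
  obtain ⟨cw, hcw⟩ := hH.exists_walk_length_eq_dist x.2 y.2
  have key : ((tw.boxProdLeft H x.2).append (cw.boxProdRight G y.1)).length
      = G.dist x.1 y.1 + H.dist x.2 y.2 := by
    rw [Walk.length_append]
    exact congrArg₂ (· + ·) ((Walk.length_map _ _).trans htw) ((Walk.length_map _ _).trans hcw)
  have h1 : (G □ H).dist (x.1, x.2) (y.1, y.2) ≤ G.dist x.1 y.1 + H.dist x.2 y.2 := by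
    rw [← key]; exact SimpleGraph.dist_le _
  have h2 := fun (w : (G □ H).Walk x y) => boxProd_walk_length_ge hG hH w
  rcases x with ⟨a, b⟩
  rcases y with ⟨c, d⟩
  refine le_antisymm h1 ?_
  obtain ⟨p, hp⟩ := ((hG.boxProd hH).exists_walk_length_eq_dist (a, b) (c, d))
  rw [← hp]; exact h2 p
end BoxDecomp

section CycleLemmas
variable {n : ℕ} [NeZero n]

lemma fin_one_val (hn : 3 ≤ n) : (1 : Fin n).val = 1 := by
  rw [Fin.val_one', Nat.mod_eq_of_lt (by omega)]

lemma finval_add_one (hn : 3 ≤ n) (x : Fin n) :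
    (x + 1).val = if x.val = n - 1 then 0 else x.val + 1 := by
  have h1 := fin_one_val hn
  have := Fin.coe_int_add_eq_ite x 1
  have hx := x.isLt
  split_ifs with h <;> [skip; skip] <;> split_ifs at this <;> omega

lemma finval_sub_one (hn : 3 ≤ n) (x : Fin n) :
    (x - 1).val = if x.val = 0 then n - 1 else x.val - 1 := by
  have h1 := fin_one_val hn
  have hthis := Fin.coe_int_sub_eq_ite x 1
  have hx := x.isLt
  rcases le_or_gt 1 x with hc | hc
  · rw [if_pos hc] at hthis
    have hc' : 1 ≤ x.val := by rwa [Fin.le_iff_val_le_val, h1] at hc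
    split_ifs with h <;> omega
  · rw [if_neg (not_le.mpr hc)] at hthis
    have hc' : x.val < 1 := by rwa [Fin.lt_iff_val_lt_val, h1] at hc
    split_ifs with h <;> omega

lemma finval_neg (x : Fin n) :
    (-x).val = if x.val = 0 then 0 else n - x.val := by
  have hz : -x = 0 - x := by ring
  rw [hz]
  have h2 := Fin.coe_int_sub_eq_ite (0 : Fin n) x
  have hx := x.isLt
  have hn1 := Nat.pos_of_ne_zero (NeZero.ne n)
  rcases le_or_gt x 0 with hc | hc
  · rw [if_pos hc] at h2
    have hc' : x.val ≤ 0 := by rwa [Fin.le_iff_val_le_val] at hc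
    split_ifs with h <;> simp only [Fin.val_zero] at * <;> omega
  · rw [if_neg (not_le.mpr hc)] at h2
    have hc' : (0 : ℕ) < x.val := by rwa [Fin.lt_iff_val_lt_val] at hc
    split_ifs with h <;> simp only [Fin.val_zero] at * <;> omega

lemma finval_sub_rev (i j : Fin n) :
    (i - j).val = if (j - i).val = 0 then 0 else n - (j - i).val := by
  rw [← finval_neg, neg_sub]

lemma fin_two_ne_zero (hn : 3 ≤ n) : (1 : Fin n) + 1 ≠ 0 := by
  intro h
  have := congrArg Fin.val h
  rw [finval_add_one hn, fin_one_val hn] at this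
  simp only [Fin.val_zero] at this
  split_ifs at this <;> omega

lemma fin_cast_inj (hn : 3 ≤ n) {a b : ℕ} (ha : a < n) (hb : b < n)
    (h : (a : Fin n) = (b : Fin n)) : a = b := by
  have := congrArg Fin.val h
  rwa [Fin.val_cast_of_lt ha, Fin.val_cast_of_lt hb] at this

lemma cyc_adj_add_one (hn : 3 ≤ n) (x : Fin n) : (cycleGraph n).Adj x (x + 1) := by
  rw [cycleGraph_adj']
  right
  rw [add_sub_cancel_left, fin_one_val hn]

lemma cyc_adj_sub_one (hn : 3 ≤ n) (x : Fin n) : (cycleGraph n).Adj x (x - 1) := by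
  rw [cycleGraph_adj']
  left
  rw [sub_sub_cancel, fin_one_val hn]

lemma cyc_adj_cases (hn : 3 ≤ n) {u v : Fin n} (h : (cycleGraph n).Adj u v) :
    v = u + 1 ∨ v = u - 1 := by
  rw [cycleGraph_adj'] at h
  rcases h with h | h
  · right
    have : u - v = 1 := Fin.ext (by rw [h, fin_one_val hn])
    rw [← this]; ring
  · left
    have : v - u = 1 := Fin.ext (by rw [h, fin_one_val hn])
    rw [← this]; ring

/-- forward arc walk of length `s` -/
def arcP (hn : 3 ≤ n) (k : Fin n) : (s : ℕ) → (cycleGraph n).Walk k (k + (s : Fin n))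
  | 0 => Walk.nil.copy rfl (by simp)
  | s + 1 => (Walk.cons (cyc_adj_add_one hn k) (arcP hn (k + 1) s)).copy rfl
      (by push_cast; ring)

/-- backward arc walk of length `s` -/
def arcN (hn : 3 ≤ n) (k : Fin n) : (s : ℕ) → (cycleGraph n).Walk k (k - (s : Fin n))
  | 0 => Walk.nil.copy rfl (by simp)
  | s + 1 => (Walk.cons (cyc_adj_sub_one hn k) (arcN hn (k - 1) s)).copy rfl
      (by push_cast; ring)

lemma arcP_length (hn : 3 ≤ n) (k : Fin n) (s : ℕ) : (arcP hn k s).length = s := by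
  induction s generalizing k with
  | zero => simp [arcP]
  | succ s ih => simp [arcP, ih]

lemma arcN_length (hn : 3 ≤ n) (k : Fin n) (s : ℕ) : (arcN hn k s).length = s := by
  induction s generalizing k with
  | zero => simp [arcN]
  | succ s ih => simp [arcN, ih]

lemma arcP_edges (hn : 3 ≤ n) (k : Fin n) (s : ℕ) :
    ∀ e ∈ (arcP hn k s).edges, ∃ t, t < s ∧ e = s(k + (t : Fin n), k + (t : Fin n) + 1) := by
  induction s generalizing k with
  | zero => simp [arcP]
  | succ s ih =>
    intro e he
    rw [arcP, Walk.edges_copy, Walk.edges_cons, List.mem_cons] at he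
    rcases he with rfl | he
    · exact ⟨0, by omega, by norm_num⟩
    · obtain ⟨t, ht, rfl⟩ := ih (k + 1) e he
      refine ⟨t + 1, by omega, ?_⟩
      have h1 : k + 1 + ((t : ℕ) : Fin n) = k + (((t + 1 : ℕ)) : Fin n) := by push_cast; ring
      rw [h1]

lemma arcN_edges (hn : 3 ≤ n) (k : Fin n) (s : ℕ) :
    ∀ e ∈ (arcN hn k s).edges, ∃ t, t < s ∧ e = s(k - (t : Fin n), k - (t : Fin n) - 1) := by
  induction s generalizing k with
  | zero => simp [arcN]
  | succ s ih =>
    intro e he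
    rw [arcN, Walk.edges_copy, Walk.edges_cons, List.mem_cons] at he
    rcases he with rfl | he
    · exact ⟨0, by omega, by norm_num⟩
    · obtain ⟨t, ht, rfl⟩ := ih (k - 1) e he
      refine ⟨t + 1, by omega, ?_⟩
      have h1 : k - 1 - ((t : ℕ) : Fin n) = k - (((t + 1 : ℕ)) : Fin n) := by push_cast; ring
      rw [h1]

lemma cycle_walk_length_ge (hn : 3 ≤ n) : ∀ {i j : Fin n} (w : (cycleGraph n).Walk i j),
    min ((j - i).val) ((i - j).val) ≤ w.length := by
  intro i j w
  induction w with
  | nil => simp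
  | @cons i p j h w ih =>
    rw [Walk.length_cons]
    have e1 : (i - j).val = if (j - i).val = 0 then 0 else n - (j - i).val := finval_sub_rev i j
    have e2 : (p - j).val = if (j - p).val = 0 then 0 else n - (j - p).val := finval_sub_rev p j
    have b1 : (j - i).val < n := (j - i).isLt
    have b2 : (j - p).val < n := (j - p).isLt
    rcases cyc_adj_cases hn h with rfl | rfl
    · have e3 : (j - (i + 1)).val = if (j - i).val = 0 then n - 1 else (j - i).val - 1 := by
        have h4 : j - (i + 1) = (j - i) - 1 := by ring
        rw [h4, finval_sub_one hn]
      split_ifs at e1 e2 e3 <;> omega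
    · have e3 : (j - (i - 1)).val = if (j - i).val = n - 1 then 0 else (j - i).val + 1 := by
        have h4 : j - (i - 1) = (j - i) + 1 := by ring
        rw [h4, finval_add_one hn]
      split_ifs at e1 e2 e3 <;> omega

lemma cycle_dist (hn : 3 ≤ n) (i j : Fin n) :
    (cycleGraph n).dist i j = min ((j - i).val) ((i - j).val) := by
  refine le_antisymm ?_ ?_
  · have l1 : (cycleGraph n).dist i j ≤ (((arcP hn i ((j - i).val)).copy rfl
        (by rw [Fin.cast_val_eq_self]; ring) : (cycleGraph n).Walk i j)).length :=
      SimpleGraph.dist_le _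
    have l2 : (cycleGraph n).dist i j ≤ (((arcN hn i ((i - j).val)).copy rfl
        (by rw [Fin.cast_val_eq_self]; ring) : (cycleGraph n).Walk i j)).length :=
      SimpleGraph.dist_le _
    rw [Walk.length_copy, arcP_length] at l1
    rw [Walk.length_copy, arcN_length] at l2
    omega
  · obtain ⟨p, hp⟩ := (cycleGraph_preconnected i j).exists_walk_length_eq_dist
    rw [← hp]
    exact cycle_walk_length_ge hn p

lemma cycle_walk_avoid (hn : 3 ≤ n) (b : Fin n) : ∀ {i j : Fin n} (w : (cycleGraph n).Walk i j),
    s(b, b + 1) ∉ w.edges →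
    (i - (b + 1)).val ≤ (j - (b + 1)).val + w.length ∧
    (j - (b + 1)).val ≤ (i - (b + 1)).val + w.length := by
  intro i j w
  induction w with
  | nil => simp
  | @cons i p j h w ih =>
    intro hw
    rw [Walk.edges_cons, List.mem_cons] at hw
    push_neg at hw
    obtain ⟨hne, hw'⟩ := hw
    obtain ⟨ih1, ih2⟩ := ih hw'
    rw [Walk.length_cons]
    have b1 : (i - (b + 1)).val < n := (i - (b + 1)).isLt
    rcases cyc_adj_cases hn h with rfl | rfl
    · -- p = i + 1
      rcases eq_or_ne ((i - (b + 1)).val) (n - 1) with hv | hv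
      · -- i = b, forbidden edge
        exfalso
        have h5 : i - (b + 1) = -1 := by
          refine Fin.ext ?_
          rw [hv, finval_neg, fin_one_val hn]
          simp only [if_neg (by omega : ¬(1 : ℕ) = 0)]
        have hib : i = b := by
          have h6 := congrArg (fun z => z + (b + 1)) h5
          simp only [sub_add_cancel] at h6
          rw [h6]; ring
        exact hne (by rw [hib])
      · have e3 : ((i + 1) - (b + 1)).val = (i - (b + 1)).val + 1 := by
          have h4 : (i + 1) - (b + 1) = (i - (b + 1)) + 1 := by ring
          rw [h4, finval_add_one hn, if_neg hv]
        omega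
    · -- p = i - 1
      rcases eq_or_ne ((i - (b + 1)).val) 0 with hv | hv
      · exfalso
        have hib : i = b + 1 := by
          have h5 : i - (b + 1) = 0 := Fin.ext (by rw [hv]; rfl)
          have h6 := congrArg (fun z => z + (b + 1)) h5
          simp only [sub_add_cancel] at h6
          rw [h6]; ring
        refine hne ?_
        rw [hib]
        have h7 : b + 1 - 1 = b := by ring
        rw [h7, Sym2.eq_swap]
      · have e3 : ((i - 1) - (b + 1)).val = (i - (b + 1)).val - 1 := by
          have h4 : (i - 1) - (b + 1) = (i - (b + 1)) - 1 := by ring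
          rw [h4, finval_sub_one hn, if_neg hv]
        omega

lemma cyc_edge_eq_iff (hn : 3 ≤ n) {a b : Fin n} :
    s(a, a + 1) = s(b, b + 1) ↔ a = b := by
  constructor
  · intro h
    rcases Sym2.eq_iff.mp h with ⟨h1, h2⟩ | ⟨h1, h2⟩
    · exact h1
    · exfalso
      exact fin_two_ne_zero hn (by linear_combination h2 - h1)
  · rintro rfl; rfl

lemma exists_shortest_walk_avoid (hn : 3 ≤ n) (k j : Fin n) :
    ∃ w : (cycleGraph n).Walk k j, w.length = (cycleGraph n).dist k j ∧
      s(k + ((n / 2 : ℕ) : Fin n), k + ((n / 2 : ℕ) : Fin n) + 1) ∉ w.edges := by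
  set h : ℕ := n / 2 with hh
  set s : ℕ := (j - k).val with hs
  have hsn : s < n := (j - k).isLt
  have hrev : (k - j).val = if s = 0 then 0 else n - s := finval_sub_rev k j
  rcases le_or_gt s h with hcase | hcase
  · -- forward arc
    refine ⟨(arcP hn k s).copy rfl (by rw [hs, Fin.cast_val_eq_self]; ring), ?_, ?_⟩
    · rw [Walk.length_copy, arcP_length, cycle_dist hn, ← hs, hrev]
      split_ifs <;> omega
    · intro hmem
      rw [Walk.edges_copy] at hmem
      obtain ⟨t, ht, het⟩ := arcP_edges hn k s _ hmem
      have : k + (t : Fin n) = k + (h : Fin n) := (cyc_edge_eq_iff hn).mp het.symm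
      have : (t : Fin n) = (h : Fin n) := add_left_cancel this
      have := fin_cast_inj hn (by omega) (by omega) this
      omega
  · -- backward arc
    have hs1 : 1 ≤ s := by omega
    have h2s : n < 2 * s := by omega
    refine ⟨(arcN hn k (n - s)).copy rfl ?_, ?_, ?_⟩
    · rw [Nat.cast_sub (by omega : s ≤ n), Fin.natCast_self, hs, Fin.cast_val_eq_self]
      ring
    · rw [Walk.length_copy, arcN_length, cycle_dist hn, ← hs, hrev]
      split_ifs <;> omega
    · intro hmem
      rw [Walk.edges_copy] at hmem
      obtain ⟨t, ht, het⟩ := arcN_edges hn k (n - s) _ hmem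
      have hform : s(k - (t : Fin n), k - (t : Fin n) - 1)
          = s(k - (t : Fin n) - 1, (k - (t : Fin n) - 1) + 1) := by
        rw [Sym2.eq_swap]
        congr 1
        ring
      rw [hform] at het
      have hkey : k - (t : Fin n) - 1 = k + (h : Fin n) := (cyc_edge_eq_iff hn).mp het.symm
      have htv : (t : Fin n) = ((n - h - 1 : ℕ) : Fin n) := by
        have hnat : (n - h - 1) + (h + 1) = n := by omega
        have e2 : ((n - h - 1 : ℕ) : Fin n) + ((h : ℕ) : Fin n) + 1 = 0 := by
          have := congrArg (Nat.cast : ℕ → Fin n) hnat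
          push_cast at this
          rw [Fin.natCast_self] at this
          linear_combination this
        linear_combination - hkey - e2
      have htv' := fin_cast_inj hn (by omega) (by omega) htv
      omega

end CycleLemmas

section Product
variable {V : Type*} {T : SimpleGraph V} {n : ℕ} [NeZero n]

lemma cycle_connected (hn : 3 ≤ n) : (cycleGraph n).Connected := by
  obtain ⟨n', rfl⟩ : ∃ n', n = n' + 1 := ⟨n - 1, by omega⟩
  exact cycleGraph_connected

lemma walk_support_of_length_zero {V : Type*} {G : SimpleGraph V} {u v : V} {p : G.Walk u v}
    (h : p.length = 0) : ∀ x ∈ p.support, x = u := by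
  cases p with
  | nil => simp
  | cons h' p => simp at h

/-- In a tree, for each edge {a,b} and vertex c, some endpoint d is separated from c
by removing the edge. -/
lemma tree_side (hT : T.IsTree) {a b : V} (hab : T.Adj a b) (c : V) :
    ∃ d, (d = a ∨ d = b) ∧ ¬(T.deleteEdges {s(a, b)}).Reachable c d := by
  have hbr : T.IsBridge s(a, b) := (isAcyclic_iff_forall_adj_isBridge.mp hT.IsAcyclic) hab
  rw [isBridge_iff] at hbr
  have hnr : ¬(T.deleteEdges {s(a, b)}).Reachable a b := hbr
  by_cases hca : (T.deleteEdges {s(a, b)}).Reachable c a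
  · exact ⟨b, Or.inr rfl, fun hcb => hnr (hca.symm.trans hcb)⟩
  · exact ⟨a, Or.inl rfl, hca⟩

section WithTn
variable (hT : T.IsTree) (hn : 3 ≤ n)

lemma prod_dist (hT : T.IsTree) (hn : 3 ≤ n) (x y : V × Fin n) :
    (T □ cycleGraph n).dist x y = T.dist x.1 y.1 + (cycleGraph n).dist x.2 y.2 :=
  boxProd_dist hT.isConnected (cycle_connected hn) x y

/-- Lifted tree-walk at a fixed layer. -/
lemma liftT_edges {c d : V} (tw : T.Walk c d) (j : Fin n) (e : Sym2 (V × Fin n))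
    (he : e ∈ (tw.boxProdLeft (cycleGraph n) j).edges) :
    ∃ p q, T.Adj p q ∧ s(p, q) ∈ tw.edges ∧ e = s((p, j), (q, j)) := by
  rw [show (tw.boxProdLeft (cycleGraph n) j).edges = _ from Walk.edges_map _ _] at he
  obtain ⟨e', he', rfl⟩ := List.mem_map.mp he
  induction e' using Sym2.ind with
  | _ p q =>
    refine ⟨p, q, tw.adj_of_mem_edges he', he', ?_⟩
    rfl

lemma liftC_edges {i k : Fin n} (cw : (cycleGraph n).Walk i k) (a : V) (e : Sym2 (V × Fin n))
    (he : e ∈ (cw.boxProdRight T a).edges) :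
    ∃ p q, (cycleGraph n).Adj p q ∧ s(p, q) ∈ cw.edges ∧ e = s((a, p), (a, q)) := by
  rw [show (cw.boxProdRight T a).edges = _ from Walk.edges_map _ _] at he
  obtain ⟨e', he', rfl⟩ := List.mem_map.mp he
  induction e' using Sym2.ind with
  | _ p q =>
    refine ⟨p, q, cw.adj_of_mem_edges he', he', ?_⟩
    rfl

/-- Canonical shortest walk: tree moves at layer `x.2`, then cycle moves in row `y.1`. -/
lemma exists_shortest_TC (hT : T.IsTree) (hn : 3 ≤ n) (x y : V × Fin n) :
    ∃ w : (T □ cycleGraph n).Walk x y, w.length = (T □ cycleGraph n).dist x y ∧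
      ∀ e ∈ w.edges, (∃ p q, T.Adj p q ∧ e = s((p, x.2), (q, x.2))) ∨
        (∃ p q, (cycleGraph n).Adj p q ∧ e = s((y.1, p), (y.1, q))) := by
  obtain ⟨tw, htw⟩ := hT.isConnected.exists_walk_length_eq_dist x.1 y.1
  obtain ⟨cw, hcw⟩ := (cycle_connected hn).exists_walk_length_eq_dist x.2 y.2
  refine ⟨((tw.boxProdLeft (cycleGraph n) x.2).append (cw.boxProdRight T y.1)).copy
      (by simp) (by simp), ?_, ?_⟩
  · rw [Walk.length_copy, Walk.length_append,
      show (tw.boxProdLeft (cycleGraph n) x.2).length = tw.length from Walk.length_map _ _,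
      show (cw.boxProdRight T y.1).length = cw.length from Walk.length_map _ _,
      htw, hcw, prod_dist hT hn]
  · intro e he
    rw [Walk.edges_copy, Walk.edges_append, List.mem_append] at he
    rcases he with he | he
    · obtain ⟨p, q, hpq, -, rfl⟩ := liftT_edges tw x.2 e he
      exact Or.inl ⟨p, q, hpq, rfl⟩
    · obtain ⟨p, q, hpq, -, rfl⟩ := liftC_edges cw y.1 e he
      exact Or.inr ⟨p, q, hpq, rfl⟩

/-- Canonical shortest walk: cycle moves in row `x.1`, then tree moves at layer `y.2`,
with the cycle part avoiding a prescribed antipodal edge when `x.2 = k`. -/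
lemma exists_shortest_CT (hT : T.IsTree) (hn : 3 ≤ n) (x y : V × Fin n) :
    ∃ w : (T □ cycleGraph n).Walk x y, w.length = (T □ cycleGraph n).dist x y ∧
      ∀ e ∈ w.edges, (∃ p q, T.Adj p q ∧ e = s((p, y.2), (q, y.2))) ∨
        (∃ p q, (cycleGraph n).Adj p q ∧ s(p, q) ∈ (Classical.choose
          (exists_shortest_walk_avoid hn x.2 y.2)).edges ∧ e = s((x.1, p), (x.1, q))) := by
  obtain ⟨hlen, -⟩ := Classical.choose_spec (exists_shortest_walk_avoid hn x.2 y.2)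
  set cw := Classical.choose (exists_shortest_walk_avoid hn x.2 y.2)
  obtain ⟨tw, htw⟩ := hT.isConnected.exists_walk_length_eq_dist x.1 y.1
  refine ⟨((cw.boxProdRight T x.1).append (tw.boxProdLeft (cycleGraph n) y.2)).copy
      (by simp) (by simp), ?_, ?_⟩
  · rw [Walk.length_copy, Walk.length_append,
      show (tw.boxProdLeft (cycleGraph n) y.2).length = tw.length from Walk.length_map _ _,
      show (cw.boxProdRight T x.1).length = cw.length from Walk.length_map _ _,
      htw, hlen, prod_dist hT hn]
    omega
  · intro e he
    rw [Walk.edges_copy, Walk.edges_append, List.mem_append] at he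
    rcases he with he | he
    · obtain ⟨p, q, hpq, hmem, rfl⟩ := liftC_edges cw x.1 e he
      exact Or.inr ⟨p, q, hpq, hmem, rfl⟩
    · obtain ⟨p, q, hpq, -, rfl⟩ := liftT_edges tw y.2 e he
      exact Or.inl ⟨p, q, hpq, rfl⟩

lemma pair_eq_fst {a b : V} {i j : Fin n} (h : ((a, i) : V × Fin n) = (b, j)) : a = b :=
  congrArg Prod.fst h

lemma pair_eq_snd {a b : V} {i j : Fin n} (h : ((a, i) : V × Fin n) = (b, j)) : i = j :=
  congrArg Prod.snd h

/-- M1: any vertex of column `j` monitors any tree edge of layer `j`. -/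
lemma monitor_tree_edge (hT : T.IsTree) (hn : 3 ≤ n) {a b : V} (hab : T.Adj a b)
    (c : V) (j : Fin n) :
    ∃ y, (T □ cycleGraph n).dist (c, j) y ≠
      ((T □ cycleGraph n).deleteEdges {s(((a : V), j), ((b : V), j))}).dist (c, j) y := by
  obtain ⟨d, hd, hnr⟩ := tree_side hT hab c
  have hcd : c ≠ d := by rintro rfl; exact hnr (Reachable.refl _)
  refine ⟨(d, j), ?_⟩
  have hD : (T □ cycleGraph n).dist (c, j) (d, j) = T.dist c d := by
    rw [prod_dist hT hn]; simp [SimpleGraph.dist_self]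
  have hD1 : 1 ≤ T.dist c d := hT.isConnected.pos_dist_of_ne hcd
  apply monitors_of hD hD1
  intro p hp
  by_contra hle
  push_neg at hle
  obtain ⟨tw, cw, hsum, htE, hcE, hsup⟩ := boxProd_walk_decomp p
  have h1 : T.dist c d ≤ tw.length := SimpleGraph.dist_le tw
  have hcw0 : cw.length = 0 := by omega
  have hsupp : ∀ v ∈ p.support, v.2 = j := fun v hv =>
    walk_support_of_length_zero hcw0 _ ((hsup v hv).2)
  have htwavoid : s(a, b) ∉ tw.edges := by
    intro hmem
    obtain ⟨r, hr⟩ := htE a b hmem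
    have hrj : r = j := hsupp _ (p.fst_mem_support_of_mem_edges hr)
    rw [hrj] at hr
    exact hp hr
  exact hnr (Walk.reachable (tw.toDeleteEdges {s(a, b)}
    (by intro f hf; simp only [Set.mem_singleton_iff]; rintro rfl; exact htwavoid hf)))

/-- M2: detection of a cycle edge from either end of a short arc through it. -/
lemma monitor_cycle_edge (hT : T.IsTree) (hn : 3 ≤ n) (a : V) (k : Fin n) (l t : ℕ)
    (hl1 : 1 ≤ l) (hl2 : 2 * l < n) (ht : t < l) :
    ((T □ cycleGraph n).dist (a, k) (a, k + ((l : ℕ) : Fin n)) ≠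
      ((T □ cycleGraph n).deleteEdges
        {s(((a : V), k + ((t : ℕ) : Fin n)), (a, k + ((t : ℕ) : Fin n) + 1))}).dist
        (a, k) (a, k + ((l : ℕ) : Fin n))) ∧
    ((T □ cycleGraph n).dist (a, k + ((l : ℕ) : Fin n)) (a, k) ≠
      ((T □ cycleGraph n).deleteEdges
        {s(((a : V), k + ((t : ℕ) : Fin n)), (a, k + ((t : ℕ) : Fin n) + 1))}).dist
        (a, k + ((l : ℕ) : Fin n)) (a, k)) := by
  set lf : Fin n := ((l : ℕ) : Fin n) with hlf
  set tf : Fin n := ((t : ℕ) : Fin n) with htf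
  set e : Sym2 (V × Fin n) := s(((a : V), k + tf), (a, k + tf + 1)) with he
  have hlv : lf.val = l := Fin.val_cast_of_lt (by omega)
  have hcd : (cycleGraph n).dist k (k + lf) = l ∧ (cycleGraph n).dist (k + lf) k = l := by
    have h1 : (k + lf - k) = lf := by ring
    have h2 : (k - (k + lf)) = -lf := by ring
    have h3 : (-lf).val = n - l := by
      rw [finval_neg, hlv, if_neg (by omega)]
    constructor
    · rw [cycle_dist hn, h1, h2, hlv, h3]; omega
    · rw [cycle_dist hn]
      have h1' : (k - (k + lf)) = -lf := by ring
      have h2' : (k + lf - k) = lf := by ring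
      rw [h1', h2', hlv, h3]; omega
  -- key: any walk between the two (in either direction) avoiding e is longer than l
  have core : ∀ (i j : Fin n), (i = k ∧ j = k + lf) ∨ (i = k + lf ∧ j = k) →
      ∀ p : (T □ cycleGraph n).Walk (a, i) (a, j), e ∉ p.edges → l < p.length := by
    rintro i j hij p hp
    by_contra hle
    push_neg at hle
    obtain ⟨tw, cw, hsum, htE, hcE, hsup⟩ := boxProd_walk_decomp p
    have hcwd : (cycleGraph n).dist i j = l := by
      rcases hij with ⟨rfl, rfl⟩ | ⟨rfl, rfl⟩
      · exact hcd.1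
      · exact hcd.2
    have h1 : l ≤ cw.length := hcwd ▸ SimpleGraph.dist_le cw
    have htw0 : tw.length = 0 := by omega
    have hsupp : ∀ v ∈ p.support, v.1 = a := fun v hv =>
      walk_support_of_length_zero htw0 _ ((hsup v hv).1)
    have hcwavoid : s(k + tf, k + tf + 1) ∉ cw.edges := by
      intro hmem
      obtain ⟨c, hc⟩ := hcE _ _ hmem
      have hca : c = a := hsupp _ (p.fst_mem_support_of_mem_edges hc)
      rw [hca] at hc
      exact hp hc
    have hineq := cycle_walk_avoid hn (k + tf) cw hcwavoid
    have hv1 : (k - (k + tf + 1)).val = n - (t + 1) := by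
      have hx : k - (k + tf + 1) = -(tf + 1) := by ring
      have hxv : (tf + 1).val = t + 1 := by
        have : tf + 1 = (((t + 1 : ℕ)) : Fin n) := by push_cast; ring
        rw [this, Fin.val_cast_of_lt (by omega)]
      rw [hx, finval_neg, hxv, if_neg (by omega)]
    have hv2 : (k + lf - (k + tf + 1)).val = l - (t + 1) := by
      have hx : k + lf - (k + tf + 1) = (((l - (t + 1) : ℕ)) : Fin n) := by
        rw [Nat.cast_sub (by omega : t + 1 ≤ l)]
        push_cast
        ring
      rw [hx, Fin.val_cast_of_lt (by omega)]
    have hcwlen : cw.length ≤ l := by omega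
    rcases hij with ⟨rfl, rfl⟩ | ⟨rfl, rfl⟩
    · rw [hv1, hv2] at hineq; omega
    · rw [hv1, hv2] at hineq; omega
  have hdist1 : (T □ cycleGraph n).dist (a, k) (a, k + lf) = l := by
    rw [prod_dist hT hn]; simp [SimpleGraph.dist_self, hcd.1]
  have hdist2 : (T □ cycleGraph n).dist (a, k + lf) (a, k) = l := by
    rw [prod_dist hT hn]; simp [SimpleGraph.dist_self, hcd.2]
  exact ⟨monitors_of hdist1 (by omega) (core k (k + lf) (Or.inl ⟨rfl, rfl⟩)),
    monitors_of hdist2 (by omega) (core (k + lf) k (Or.inr ⟨rfl, rfl⟩))⟩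

/-- N1: a vertex at layer `j' ≠ j` does not detect a tree edge of layer `j`. -/
lemma unmonitored_tree_edge (hT : T.IsTree) (hn : 3 ≤ n) {a b : V} (hab : T.Adj a b)
    (j : Fin n) (c : V) {j' : Fin n} (hj : j' ≠ j) (y : V × Fin n) :
    ((T □ cycleGraph n).deleteEdges {s(((a : V), j), ((b : V), j))}).dist (c, j') y =
      (T □ cycleGraph n).dist (c, j') y := by
  obtain ⟨w, hlen, hedges⟩ := exists_shortest_TC hT hn (c, j') y
  apply deleteEdges_dist_eq w hlen
  intro hmem
  rcases hedges _ hmem with ⟨p, q, hpq, heq⟩ | ⟨p, q, hpq, heq⟩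
  · rcases Sym2.eq_iff.mp heq with ⟨h1, h2⟩ | ⟨h1, h2⟩
    · exact hj (pair_eq_snd h1).symm
    · exact hj (pair_eq_snd h1).symm
  · rcases Sym2.eq_iff.mp heq with ⟨h1, h2⟩ | ⟨h1, h2⟩
    · exact T.irrefl ((pair_eq_fst h1) ▸ (pair_eq_fst h2) ▸ hab)
    · exact T.irrefl ((pair_eq_fst h1) ▸ (pair_eq_fst h2) ▸ hab)

/-- N2: a vertex in row `c ≠ a` does not detect a cycle edge of row `a`. -/
lemma unmonitored_cycle_edge (hT : T.IsTree) (hn : 3 ≤ n) (a : V) (jj : Fin n)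
    {c : V} (hc : c ≠ a) (k : Fin n) (y : V × Fin n) :
    ((T □ cycleGraph n).deleteEdges {s(((a : V), jj), ((a : V), jj + 1))}).dist (c, k) y =
      (T □ cycleGraph n).dist (c, k) y := by
  obtain ⟨w, hlen, hedges⟩ := exists_shortest_CT hT hn (c, k) y
  apply deleteEdges_dist_eq w hlen
  intro hmem
  rcases hedges _ hmem with ⟨p, q, hpq, heq⟩ | ⟨p, q, hpq, hmem2, heq⟩
  · rcases Sym2.eq_iff.mp heq with ⟨h1, h2⟩ | ⟨h1, h2⟩
    · exact T.irrefl ((pair_eq_fst h1) ▸ (pair_eq_fst h2) ▸ hpq)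
    · exact T.irrefl ((pair_eq_fst h2) ▸ (pair_eq_fst h1) ▸ hpq)
  · rcases Sym2.eq_iff.mp heq with ⟨h1, h2⟩ | ⟨h1, h2⟩
    · exact hc (pair_eq_fst h1).symm
    · exact hc (pair_eq_fst h1).symm

/-- N3: the single vertex `(a,k)` does not detect the antipodal cycle edge of its row. -/
lemma unmonitored_antipodal (hT : T.IsTree) (hn : 3 ≤ n) (a : V) (k : Fin n) (y : V × Fin n) :
    ((T □ cycleGraph n).deleteEdges
      {s(((a : V), k + ((n / 2 : ℕ) : Fin n)), ((a : V), k + ((n / 2 : ℕ) : Fin n) + 1))}).dist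
        (a, k) y = (T □ cycleGraph n).dist (a, k) y := by
  obtain ⟨w, hlen, hedges⟩ := exists_shortest_CT hT hn (a, k) y
  apply deleteEdges_dist_eq w hlen
  intro hmem
  obtain ⟨-, havoid⟩ := Classical.choose_spec (exists_shortest_walk_avoid hn
    ((a, k) : V × Fin n).2 y.2)
  rcases hedges _ hmem with ⟨p, q, hpq, heq⟩ | ⟨p, q, hpq, hmem2, heq⟩
  · rcases Sym2.eq_iff.mp heq with ⟨h1, h2⟩ | ⟨h1, h2⟩
    · exact T.irrefl ((pair_eq_fst h1) ▸ (pair_eq_fst h2) ▸ hpq)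
    · exact T.irrefl ((pair_eq_fst h2) ▸ (pair_eq_fst h1) ▸ hpq)
  · apply havoid
    rcases Sym2.eq_iff.mp heq with ⟨h1, h2⟩ | ⟨h1, h2⟩
    · have e1 : p = k + ((n / 2 : ℕ) : Fin n) := (pair_eq_snd h1).symm
      have e2 : q = k + ((n / 2 : ℕ) : Fin n) + 1 := (pair_eq_snd h2).symm
      rw [e1, e2] at hmem2
      exact hmem2
    · have e1 : q = k + ((n / 2 : ℕ) : Fin n) := (pair_eq_snd h1).symm
      have e2 : p = k + ((n / 2 : ℕ) : Fin n) + 1 := (pair_eq_snd h2).symm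
      rw [e1, e2] at hmem2
      rw [show s(k + ((n / 2 : ℕ) : Fin n) + 1, k + ((n / 2 : ℕ) : Fin n))
        = s(k + ((n / 2 : ℕ) : Fin n), k + ((n / 2 : ℕ) : Fin n) + 1) from Sym2.eq_swap] at hmem2
      exact hmem2

end WithTn
lemma coverage (hn : 3 ≤ n) (c jj : Fin n) :
    ∃ (k₀ : Fin n) (l t : ℕ), 1 ≤ l ∧ 2 * l < n ∧ t < l ∧ jj = k₀ + ((t : ℕ) : Fin n) ∧
      (k₀ = c ∨ k₀ + ((l : ℕ) : Fin n) = c ∨ k₀ = c + ((n / 2 : ℕ) : Fin n) ∨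
        k₀ + ((l : ℕ) : Fin n) = c + ((n / 2 : ℕ) : Fin n)) := by
  set h := n / 2 with hh
  set L := (n - h + 1) / 2 with hL
  set u := (jj + 1 - c).val with hu
  have hun : u < n := (jj + 1 - c).isLt
  have hcu : jj + 1 = c + ((u : ℕ) : Fin n) := by rw [hu, Fin.cast_val_eq_self]; ring
  have hsplit : u = 0 ∨ (1 ≤ u ∧ u ≤ L) ∨ (h + 1 - L ≤ u ∧ u ≤ h - 1) ∨ u = h ∨
      (h + 1 ≤ u ∧ u ≤ h + L) ∨ (n + 1 - L ≤ u ∧ u ≤ n - 1) := by omega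
  rcases hsplit with hc0 | hc1 | hc2 | hc3 | hc4 | hc5
  · -- u = 0 : c = jj + 1
    refine ⟨jj, 1, 0, le_refl 1, by omega, by omega, by simp, Or.inr (Or.inl ?_)⟩
    rw [hc0] at hcu
    simp only [Nat.cast_zero, add_zero] at hcu
    rw [Nat.cast_one]
    exact hcu
  · -- 1 ≤ u ≤ L
    refine ⟨c, u, u - 1, by omega, by omega, by omega, ?_, Or.inl rfl⟩
    have e1 : ((u - 1 : ℕ) : Fin n) = ((u : ℕ) : Fin n) - 1 := by
      rw [Nat.cast_sub (by omega)]; simp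
    rw [e1]
    linear_combination hcu
  · -- h + 1 - L ≤ u ≤ h - 1
    refine ⟨jj, h + 1 - u, 0, by omega, by omega, by omega, by simp, Or.inr (Or.inr (Or.inr ?_))⟩
    have e1 : ((h + 1 - u : ℕ) : Fin n) = ((h : ℕ) : Fin n) + 1 - ((u : ℕ) : Fin n) := by
      rw [Nat.cast_sub (by omega)]; push_cast; ring
    rw [e1]
    linear_combination hcu
  · -- u = h
    refine ⟨jj, 1, 0, le_refl 1, by omega, by omega, by simp, Or.inr (Or.inr (Or.inr ?_))⟩
    have e1 : ((u : ℕ) : Fin n) = ((h : ℕ) : Fin n) := by rw [hc3]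
    rw [Nat.cast_one]
    rw [e1] at hcu
    linear_combination hcu
  · -- h + 1 ≤ u ≤ h + L
    refine ⟨c + ((h : ℕ) : Fin n), u - h, u - h - 1, by omega, by omega, by omega, ?_,
      Or.inr (Or.inr (Or.inl rfl))⟩
    have e1 : ((u - h - 1 : ℕ) : Fin n) = ((u : ℕ) : Fin n) - ((h : ℕ) : Fin n) - 1 := by
      rw [Nat.cast_sub (by omega : 1 ≤ u - h), Nat.cast_sub (by omega : h ≤ u)]; simp
    rw [e1]
    linear_combination hcu
  · -- n + 1 - L ≤ u ≤ n - 1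
    refine ⟨jj, n + 1 - u, 0, by omega, by omega, by omega, by simp, Or.inr (Or.inl ?_)⟩
    have e1 : ((n + 1 - u : ℕ) : Fin n) = 1 - ((u : ℕ) : Fin n) := by
      rw [Nat.cast_sub (by omega)]; push_cast
      rw [Fin.natCast_self]; ring
    rw [e1]
    linear_combination hcu

lemma prod_edge_cases (hn : 3 ≤ n) {e : Sym2 (V × Fin n)}
    (he : e ∈ (T □ cycleGraph n).edgeSet) :
    (∃ (a b : V) (j : Fin n), T.Adj a b ∧ e = s((a, j), (b, j))) ∨
    (∃ (a : V) (jj : Fin n), e = s((a, jj), (a, jj + 1))) := by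
  induction e using Sym2.ind with
  | _ x y =>
    rw [mem_edgeSet] at he
    rcases boxProd_adj.mp he with ⟨ha, hb⟩ | ⟨ha, hb⟩
    · left
      refine ⟨x.1, y.1, x.2, ha, ?_⟩
      have hx : x = (x.1, x.2) := rfl
      have hy : y = (y.1, x.2) := by rw [hb]
      rw [hx, hy]
    · right
      rcases cyc_adj_cases hn ha with hy | hy
      · refine ⟨x.1, x.2, ?_⟩
        have hx : x = (x.1, x.2) := rfl
        have hy2 : y = (x.1, x.2 + 1) := by
          have : y = (y.1, y.2) := rfl
          rw [this, ← hb, hy]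
        rw [hx, hy2]
      · refine ⟨x.1, y.2, ?_⟩
        have hyy : y = (x.1, y.2) := by
          have : y = (y.1, y.2) := rfl
          rw [this, ← hb]
        have hx : x = (x.1, y.2 + 1) := by
          have : x = (x.1, x.2) := rfl
          rw [this, hy]
          congr 1
          ring
        rw [hx, hyy, Sym2.eq_swap]

end Product

/-- A set `M` of vertices is a distance-edge-monitoring set of `G`. -/
def demSet {V : Type*} (G : SimpleGraph V) (M : Set V) : Prop :=
  ∀ e ∈ G.edgeSet, ∃ x ∈ M, ∃ y : V, G.dist x y ≠ (G.deleteEdges {e}).dist x y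

/-- The distance-edge-monitoring number of `G`. -/
noncomputable def dem {V : Type*} (G : SimpleGraph V) [Fintype V] : ℕ :=
  sInf {k | ∃ M : Finset V, M.card = k ∧ demSet G ↑M}

section Final
variable {V : Type*} {T : SimpleGraph V} {n : ℕ} [NeZero n]

lemma demSet_of (hT : T.IsTree) (hn : 3 ≤ n) (M : Finset (V × Fin n))
    (hcol : ∀ j : Fin n, ∃ x ∈ M, (x : V × Fin n).2 = j)
    (hrow : ∀ a : V, ∃ c : Fin n, (a, c) ∈ M ∧ (a, c + ((n / 2 : ℕ) : Fin n)) ∈ M) :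
    demSet (T □ cycleGraph n) ↑M := by
  intro e he
  rcases prod_edge_cases hn he with ⟨a, b, j, hab, rfl⟩ | ⟨a, jj, rfl⟩
  · obtain ⟨x, hxM, hx2⟩ := hcol j
    obtain ⟨x1, x2⟩ := x
    simp only at hx2
    subst hx2
    obtain ⟨y, hy⟩ := monitor_tree_edge hT hn hab x1 x2
    exact ⟨(x1, x2), Finset.mem_coe.mpr hxM, y, hy⟩
  · obtain ⟨c, hc1, hc2⟩ := hrow a
    obtain ⟨k₀, l, t, hl1, hl2, ht, hjj, hopt⟩ := coverage hn c jj
    obtain ⟨m1, m2⟩ := monitor_cycle_edge hT hn a k₀ l t hl1 hl2 ht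
    rw [hjj]
    rcases hopt with h | h | h | h
    · exact ⟨(a, k₀), Finset.mem_coe.mpr (h ▸ hc1), (a, k₀ + ((l : ℕ) : Fin n)), m1⟩
    · exact ⟨(a, k₀ + ((l : ℕ) : Fin n)), Finset.mem_coe.mpr (h ▸ hc1), (a, k₀), m2⟩
    · exact ⟨(a, k₀), Finset.mem_coe.mpr (h ▸ hc2), (a, k₀ + ((l : ℕ) : Fin n)), m1⟩
    · exact ⟨(a, k₀ + ((l : ℕ) : Fin n)), Finset.mem_coe.mpr (h ▸ hc2), (a, k₀), m2⟩

lemma demSet_lower [Fintype V] (hT : T.IsTree) (hn : 3 ≤ n) (hm2 : 2 ≤ Fintype.card V)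
    (M : Finset (V × Fin n)) (hM : demSet (T □ cycleGraph n) ↑M) :
    n ≤ M.card ∧ 2 * Fintype.card V ≤ M.card := by
  classical
  obtain ⟨a0, b0, hab0⟩ : ∃ a b, T.Adj a b := by
    obtain ⟨u, v, huv⟩ := Fintype.exists_pair_of_one_lt_card (α := V) (by omega)
    obtain ⟨w⟩ := hT.isConnected u v
    cases w with
    | nil => exact absurd rfl huv
    | cons h _ => exact ⟨_, _, h⟩
  constructor
  · -- column count
    have hcol : ∀ j : Fin n, ∃ x, x ∈ M ∧ (x : V × Fin n).2 = j := by
      intro j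
      have hedge : s(((a0 : V), j), ((b0 : V), j)) ∈ (T □ cycleGraph n).edgeSet := by
        rw [mem_edgeSet]; exact boxProd_adj.mpr (Or.inl ⟨hab0, rfl⟩)
      obtain ⟨x, hxM, y, hxy⟩ := hM _ hedge
      refine ⟨x, Finset.mem_coe.mp hxM, ?_⟩
      by_contra hne
      exact hxy ((unmonitored_tree_edge hT hn hab0 j x.1 hne y).symm)
    choose f hf using hcol
    have hcard : (Finset.univ : Finset (Fin n)).card ≤ M.card := by
      apply Finset.card_le_card_of_injOn f (fun j _ => (hf j).1)
      intro j1 _ j2 _ heq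
      rw [← (hf j1).2, ← (hf j2).2, heq]
    simpa using hcard
  · -- row count
    have hrow : ∀ a : V, 2 ≤ (M.filter (fun x => x.1 = a)).card := by
      intro a
      by_contra hlt
      push_neg at hlt
      have hedge0 : s(((a : V), (0 : Fin n)), ((a : V), (0 : Fin n) + 1)) ∈
          (T □ cycleGraph n).edgeSet := by
        rw [mem_edgeSet]; exact boxProd_adj.mpr (Or.inr ⟨cyc_adj_add_one hn 0, rfl⟩)
      obtain ⟨x, hxM, y, hxy⟩ := hM _ hedge0
      have hxa : x.1 = a := by
        by_contra hne
        exact hxy ((unmonitored_cycle_edge hT hn a 0 hne x.2 y).symm)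
      have hxmem : x ∈ M.filter (fun z => z.1 = a) :=
        Finset.mem_filter.mpr ⟨Finset.mem_coe.mp hxM, hxa⟩
      have hcard1 : (M.filter (fun z => z.1 = a)).card = 1 :=
        le_antisymm (by omega) (Finset.card_pos.mpr ⟨x, hxmem⟩)
      obtain ⟨z, hz⟩ := Finset.card_eq_one.mp hcard1
      have hxz : x = z := Finset.mem_singleton.mp (hz ▸ hxmem)
      have hedge2 : s(((a : V), x.2 + ((n / 2 : ℕ) : Fin n)),
          ((a : V), x.2 + ((n / 2 : ℕ) : Fin n) + 1)) ∈ (T □ cycleGraph n).edgeSet := by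
        rw [mem_edgeSet]; exact boxProd_adj.mpr (Or.inr ⟨cyc_adj_add_one hn _, rfl⟩)
      obtain ⟨x', hx'M, y', hxy'⟩ := hM _ hedge2
      have hx'a : x'.1 = a := by
        by_contra hne
        exact hxy' ((unmonitored_cycle_edge hT hn a _ hne x'.2 y').symm)
      have hx'mem : x' ∈ M.filter (fun z => z.1 = a) :=
        Finset.mem_filter.mpr ⟨Finset.mem_coe.mp hx'M, hx'a⟩
      have hx'z : x' = z := Finset.mem_singleton.mp (hz ▸ hx'mem)
      have hx'x : x' = (a, x.2) := by
        have h1 : x'.2 = x.2 := by rw [hx'z, ← hxz]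
        exact Prod.ext hx'a h1
      rw [hx'x] at hxy'
      exact hxy' ((unmonitored_antipodal hT hn a x.2 y').symm)
    have hsum : M.card = ∑ a ∈ Finset.univ, (M.filter (fun x => x.1 = a)).card :=
      Finset.card_eq_sum_card_fiberwise (by simp)
    have hge : ∑ a ∈ (Finset.univ : Finset V), 2 ≤
        ∑ a ∈ Finset.univ, (M.filter (fun x => x.1 = a)).card :=
      Finset.sum_le_sum (fun a _ => hrow a)
    simp only [Finset.sum_const, Finset.card_univ, smul_eq_mul] at hge
    omega

lemma construction_small [Fintype V] (hT : T.IsTree) (hn : 3 ≤ n)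
    (hnm : n ≤ 2 * Fintype.card V) (hm2 : 2 ≤ Fintype.card V) :
    ∃ M : Finset (V × Fin n), M.card = 2 * Fintype.card V ∧ demSet (T □ cycleGraph n) ↑M := by
  classical
  set m := Fintype.card V with hm
  set t : Fin m ≃ V := (Fintype.equivFin V).symm with hteq
  have hhn : n / 2 < n := by omega
  set hb : Fin n := ((n / 2 : ℕ) : Fin n) with hhb
  have hbv : hb.val = n / 2 := Fin.val_cast_of_lt hhn
  set p : Fin m → Fin n := fun i => ⟨min i.val (n - 1), by omega⟩ with hp
  set M : Finset (V × Fin n) :=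
    Finset.univ.biUnion (fun i : Fin m => {(t i, p i), (t i, p i + hb)}) with hM
  have hpb : ∀ i : Fin m, p i ≠ p i + hb := by
    intro i h
    have h2 : hb = 0 := by
      have := congrArg (fun z => z - p i) h
      simpa using this.symm
    have := congrArg Fin.val h2
    rw [hbv] at this
    simp at this
    omega
  refine ⟨M, ?_, ?_⟩
  · rw [hM, Finset.card_biUnion]
    · have : ∀ i : Fin m, ({(t i, p i), (t i, p i + hb)} : Finset (V × Fin n)).card = 2 := by
        intro i
        rw [Finset.card_pair]
        intro h
        exact hpb i (congrArg Prod.snd h)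
      rw [Finset.sum_congr rfl (fun i _ => this i)]
      simp [mul_comm]
    · intro i _ j _ hij
      simp only [Finset.disjoint_left, Finset.mem_insert, Finset.mem_singleton]
      rintro x (rfl | rfl) h <;>
        (rcases h with h | h <;> exact hij (t.injective (congrArg Prod.fst h)))
  · apply demSet_of hT hn
    · intro j
      rcases lt_or_ge j.val m with hj | hj
      · refine ⟨(t ⟨j.val, hj⟩, p ⟨j.val, hj⟩), ?_, ?_⟩
        · rw [hM]
          exact Finset.mem_biUnion.mpr ⟨⟨j.val, hj⟩, Finset.mem_univ _, by simp⟩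
        · simp only [hp]
          exact Fin.ext (by simp; omega)
      · have hjh : n / 2 ≤ j.val := by omega
        have hlt : j.val - n / 2 < m := by have := j.isLt; omega
        refine ⟨(t ⟨j.val - n / 2, hlt⟩, p ⟨j.val - n / 2, hlt⟩ + hb), ?_, ?_⟩
        · rw [hM]
          exact Finset.mem_biUnion.mpr ⟨⟨j.val - n / 2, hlt⟩, Finset.mem_univ _, by simp⟩
        · simp only
          refine Fin.ext ?_
          rw [Fin.val_add, hbv]
          have hpv : (p ⟨j.val - n / 2, hlt⟩).val = j.val - n / 2 := by
            simp only [hp]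
            have := j.isLt
            simp
            omega
          rw [hpv, Nat.mod_eq_of_lt (by have := j.isLt; omega)]
          have := j.isLt
          omega
    · intro a
      refine ⟨p (t.symm a), ?_, ?_⟩
      · rw [hM]
        refine Finset.mem_biUnion.mpr ⟨t.symm a, Finset.mem_univ _, ?_⟩
        simp
      · rw [hM]
        refine Finset.mem_biUnion.mpr ⟨t.symm a, Finset.mem_univ _, ?_⟩
        simp
        exact Or.inr rfl

lemma construction_big [Fintype V] (hT : T.IsTree) (hn : 3 ≤ n)
    (hnm : 2 * Fintype.card V + 1 ≤ n) (hm2 : 2 ≤ Fintype.card V) :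
    ∃ M : Finset (V × Fin n), M.card = n ∧ demSet (T □ cycleGraph n) ↑M := by
  classical
  set m := Fintype.card V with hm
  set t : Fin m ≃ V := (Fintype.equivFin V).symm with hteq
  have hhn : n / 2 < n := by omega
  set hb : Fin n := ((n / 2 : ℕ) : Fin n) with hhb
  have hbv : hb.val = n / 2 := Fin.val_cast_of_lt hhn
  set f : Fin n → Fin m := fun j =>
    if h1 : j.val < m then ⟨j.val, h1⟩
    else if h2 : n / 2 ≤ j.val ∧ j.val < n / 2 + m then ⟨j.val - n / 2, by omega⟩
    else ⟨0, by omega⟩ with hf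
  set M : Finset (V × Fin n) := Finset.univ.image (fun j : Fin n => (t (f j), j)) with hM
  refine ⟨M, ?_, ?_⟩
  · rw [hM, Finset.card_image_of_injective _ (fun j1 j2 heq => congrArg Prod.snd heq)]
    simp
  · apply demSet_of hT hn
    · intro j
      exact ⟨(t (f j), j), by rw [hM]; exact Finset.mem_image_of_mem _ (Finset.mem_univ j), rfl⟩
    · intro a
      set i := t.symm a with hi
      have him : i.val < m := i.isLt
      have hin : i.val < n := by omega
      set c : Fin n := ⟨i.val, hin⟩ with hc
      have hfc : f c = i := by
        simp only [hf, hc]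
        rw [dif_pos him]
      have hcbval : (c + hb).val = i.val + n / 2 := by
        have hcv : c.val = i.val := rfl
        rw [Fin.val_add, hbv, hcv]
        exact Nat.mod_eq_of_lt (by omega)
      have hfcb : f (c + hb) = i := by
        rw [hf]
        simp only
        rw [dif_neg (by rw [hcbval]; omega), dif_pos (by rw [hcbval]; constructor <;> omega)]
        refine Fin.ext ?_
        simp only
        rw [hcbval]
        omega
      refine ⟨c, ?_, ?_⟩
      · have : ((a : V), c) = (t (f c), c) := by rw [hfc, hi]; simp
        rw [hM, this]
        exact Finset.mem_image_of_mem _ (Finset.mem_univ c)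
      · have : ((a : V), c + hb) = (t (f (c + hb)), c + hb) := by rw [hfcb, hi]; simp
        rw [hM, this]
        exact Finset.mem_image_of_mem _ (Finset.mem_univ (c + hb))

end Final

theorem stmt_17 {V : Type*} [Fintype V] (T : SimpleGraph V) (hT : T.IsTree)
    (m n : ℕ) (hm : Fintype.card V = m) (hm2 : 2 ≤ m) (hn : 3 ≤ n) :
    (2 * m + 1 ≤ n → dem (T □ cycleGraph n) = n) ∧
    (n ≤ 2 * m → dem (T □ cycleGraph n) = 2 * m) := by
  haveI : NeZero n := ⟨by omega⟩
  subst hm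
  constructor
  · intro hcase
    obtain ⟨M, hMcard, hMdem⟩ := construction_big hT hn hcase hm2
    refine le_antisymm (Nat.sInf_le ⟨M, hMcard, hMdem⟩) ?_
    refine le_csInf ⟨n, M, hMcard, hMdem⟩ ?_
    rintro k ⟨M', hM'c, hM'dem⟩
    have := (demSet_lower hT hn hm2 M' hM'dem).1
    omega
  · intro hcase
    obtain ⟨M, hMcard, hMdem⟩ := construction_small hT hn hcase hm2
    refine le_antisymm (Nat.sInf_le ⟨M, hMcard, hMdem⟩) ?_
    refine le_csInf ⟨2 * Fintype.card V, M, hMcard, hMdem⟩ ?_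
    rintro k ⟨M', hM'c, hM'dem⟩
    have := (demSet_lower hT hn hm2 M' hM'dem).2
    omega
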